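/- Suppose m is odd. Then the bilinear form 𝔅 is Spin(1, 2m)-invariant: for all indices a, b ∈ {0, 1, …, 2m} with a ≠ b and all σ, τ ∈ P, one has 𝔅(Γ_a Γ_b σ, τ) + 𝔅(σ, Γ_a Γ_b τ) = 0; that is, 𝔅 is invariant under the infinitesimal action of the Lie algebra so(1, 2m) represented by the operators Γ_a Γ_b. -/

import Mathlib

noncomputable section

/-- The spinor space `P`: complex functions on subsets of `Fin m`
(the fermionic Fock model of the exterior algebra of `ℂ^m`). -/
abbrev SpinorSpace (m : ℕ) := Finset (Fin m) → ℂ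

/-- The creation operator `c_j`. -/
def creation {m : ℕ} (j : Fin m) (f : SpinorSpace m) : SpinorSpace m := fun S =>
  if j ∈ S then (-1 : ℂ) ^ (S.filter fun i => i < j).card * f (S.erase j) else 0

/-- The annihilation operator `a_j`. -/
def annihilation {m : ℕ} (j : Fin m) (f : SpinorSpace m) : SpinorSpace m := fun S =>
  if j ∈ S then 0 else (-1 : ℂ) ^ (S.filter fun i => i < j).card * f (insert j S)

/-- The gamma operators `Γ_I`, `I = 1, …, 2m`, here indexed by `Fin (2 * m)` (0-based):
`Γ_j = c_j + a_j` and `Γ_{m+j} = i (c_j − a_j)` for `j = 1, …, m`. -/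
def gammaOp {m : ℕ} (I : Fin (2 * m)) (f : SpinorSpace m) : SpinorSpace m :=
  if h : (I : ℕ) < m then
    creation ⟨(I : ℕ), h⟩ f + annihilation ⟨(I : ℕ), h⟩ f
  else
    Complex.I • (creation ⟨(I : ℕ) - m, by have := I.isLt; omega⟩ f
      - annihilation ⟨(I : ℕ) - m, by have := I.isLt; omega⟩ f)

/-- The Hermitian inner product `⟨f, g⟩ = Σ_S conj (f S) * g S` on the spinor space. -/
def herm {m : ℕ} (f g : SpinorSpace m) : ℂ :=
  ∑ S : Finset (Fin m), (starRingEnd ℂ) (f S) * g S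

/-- The composition `Γ_{I₁} ∘ Γ_{I₂} ∘ ⋯ ∘ Γ_{I_k}` corresponding to a list of indices. -/
def gammaProd {m : ℕ} (l : List (Fin (2 * m))) : SpinorSpace m → SpinorSpace m :=
  l.foldr (fun I F => gammaOp I ∘ F) id

/-- The conjugation operator `κ`. -/
def conjOp {m : ℕ} (f : SpinorSpace m) : SpinorSpace m := fun S => (starRingEnd ℂ) (f S)

/-- The conjugate-linear operator `A = Γ_1 ∘ Γ_2 ∘ ⋯ ∘ Γ_m ∘ κ`. -/
def opA (m : ℕ) : SpinorSpace m → SpinorSpace m :=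
  gammaProd (List.ofFn fun j : Fin m =>
    (⟨(j : ℕ), by have := j.isLt; omega⟩ : Fin (2 * m))) ∘ conjOp

/-- The conjugate-linear operator `B = Γ_{m+1} ∘ Γ_{m+2} ∘ ⋯ ∘ Γ_{2m} ∘ κ`. -/
def opB (m : ℕ) : SpinorSpace m → SpinorSpace m :=
  gammaProd (List.ofFn fun j : Fin m =>
    (⟨m + (j : ℕ), by have := j.isLt; omega⟩ : Fin (2 * m))) ∘ conjOp

/-- The timelike gamma operator `Γ_0 = i^{m+1} Γ_1 Γ_2 ⋯ Γ_{2m}`. -/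
def gammaZero (m : ℕ) : SpinorSpace m → SpinorSpace m := fun f =>
  Complex.I ^ (m + 1) • gammaProd (List.ofFn fun I : Fin (2 * m) => I) f

/-- The Lorentzian family of gamma operators `Γ_0, Γ_1, …, Γ_{2m}`,
indexed by `Fin (2 * m + 1)`, with `Γ_0` in position `0`. -/
def gammaLor (m : ℕ) (A : Fin (2 * m + 1)) : SpinorSpace m → SpinorSpace m :=
  if h : (A : ℕ) = 0 then gammaZero m
  else gammaOp (⟨(A : ℕ) - 1, by have := A.isLt; omega⟩ : Fin (2 * m))

/-- The bilinear form `𝔄(σ, τ) = ⟨A σ, τ⟩`. -/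
def formA {m : ℕ} (σ τ : SpinorSpace m) : ℂ := herm (opA m σ) τ

/-- The bilinear form `𝔅(σ, τ) = ⟨B σ, τ⟩`. -/
def formB {m : ℕ} (σ τ : SpinorSpace m) : ℂ := herm (opB m σ) τ

namespace SpinorAux

variable {m : ℕ}

/-- sign of `j` relative to `S` -/
def sg (j : Fin m) (S : Finset (Fin m)) : ℂ := (-1) ^ ((S.filter fun i => i < j).card)

lemma creation_apply (j : Fin m) (f : SpinorSpace m) (S) :
    creation j f S = if j ∈ S then sg j S * f (S.erase j) else 0 := rfl

lemma annihilation_apply (j : Fin m) (f : SpinorSpace m) (S) :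
    annihilation j f S = if j ∈ S then 0 else sg j S * f (insert j S) := rfl

lemma conj_sg (j : Fin m) (S) : (starRingEnd ℂ) (sg j S) = sg j S := by
  simp [sg]

lemma sg_mul_self (j : Fin m) (S) : sg j S * sg j S = 1 := by
  simp [sg, ← mul_pow]

lemma sg_insert {j : Fin m} (k : Fin m) {S} (h : j ∉ S) :
    sg k (insert j S) = (if j < k then -1 else 1) * sg k S := by
  unfold sg
  rw [Finset.filter_insert]
  by_cases hl : j < k
  · rw [if_pos hl, if_pos hl,
      Finset.card_insert_of_notMem (by simp [h]), pow_succ]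
    ring
  · rw [if_neg hl, if_neg hl, one_mul]

lemma sg_erase {j : Fin m} (k : Fin m) {S} (h : j ∈ S) :
    sg k (S.erase j) = (if j < k then -1 else 1) * sg k S := by
  have h3 := sg_insert (j := j) (S := S.erase j) k (Finset.notMem_erase j S)
  conv_rhs => rw [← Finset.insert_erase h]
  rw [h3]
  by_cases hl : j < k <;> simp [hl]

lemma sg_insert_self {j : Fin m} {S} (h : j ∉ S) : sg j (insert j S) = sg j S := by
  rw [sg_insert _ h]; simp

lemma sg_erase_self (j : Fin m) (S) : sg j (S.erase j) = sg j S := by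
  by_cases h : j ∈ S
  · rw [sg_erase _ h]; simp
  · rw [Finset.erase_eq_of_notMem h]

/-- CAR: creation-creation anticommutator vanishes (all j, k). -/
lemma car_cc (j k : Fin m) (f : SpinorSpace m) :
    creation j (creation k f) + creation k (creation j f) = 0 := by
  by_cases hjk : j = k
  · subst hjk
    funext S
    simp [creation_apply, Finset.notMem_erase]
  funext S
  simp only [Pi.add_apply, Pi.zero_apply, creation_apply]
  by_cases hj : j ∈ S <;> by_cases hk : k ∈ S
  · have hkj : k ∈ S.erase j := Finset.mem_erase.2 ⟨fun h => hjk h.symm, hk⟩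
    have hjk' : j ∈ S.erase k := Finset.mem_erase.2 ⟨hjk, hj⟩
    rw [if_pos hj, if_pos hk, if_pos hkj, if_pos hjk',
      sg_erase k hj, sg_erase j hk, Finset.erase_right_comm]
    rcases lt_or_gt_of_ne hjk with h | h
    · rw [if_pos h, if_neg (asymm h)]; ring
    · rw [if_neg (asymm h), if_pos h]; ring
  · have : k ∉ S.erase j := fun h => hk (Finset.mem_erase.1 h).2
    simp [hj, hk, this]
  · have : j ∉ S.erase k := fun h => hj (Finset.mem_erase.1 h).2
    simp [hj, hk, this]
  · simp [hj, hk]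

/-- CAR: annihilation-annihilation anticommutator vanishes (all j, k). -/
lemma car_aa (j k : Fin m) (f : SpinorSpace m) :
    annihilation j (annihilation k f) + annihilation k (annihilation j f) = 0 := by
  by_cases hjk : j = k
  · subst hjk
    funext S
    simp [annihilation_apply, Finset.mem_insert_self]
  funext S
  simp only [Pi.add_apply, Pi.zero_apply, annihilation_apply]
  by_cases hj : j ∈ S <;> by_cases hk : k ∈ S
  · simp [hj, hk]
  · have : j ∈ insert k S := Finset.mem_insert.2 (Or.inr hj)
    simp [hj, hk, this]
  · have : k ∈ insert j S := Finset.mem_insert.2 (Or.inr hk)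
    simp [hj, hk, this]
  · have hkj : k ∉ insert j S := by simp [hk, Ne.symm hjk]
    have hjk' : j ∉ insert k S := by simp [hj, hjk]
    rw [if_neg hj, if_neg hk, if_neg hkj, if_neg hjk',
      sg_insert k hj, sg_insert j hk, Finset.insert_comm k j S]
    rcases lt_or_gt_of_ne hjk with h | h
    · rw [if_pos h, if_neg (asymm h)]; ring
    · rw [if_neg (asymm h), if_pos h]; ring

/-- CAR: mixed anticommutator for distinct indices. -/
lemma car_ca_ne {j k : Fin m} (hjk : j ≠ k) (f : SpinorSpace m) :
    creation j (annihilation k f) + annihilation k (creation j f) = 0 := by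
  funext S
  simp only [Pi.add_apply, Pi.zero_apply, creation_apply, annihilation_apply]
  by_cases hj : j ∈ S <;> by_cases hk : k ∈ S
  · have : k ∈ S.erase j := Finset.mem_erase.2 ⟨fun h => hjk h.symm, hk⟩
    simp [hj, hk, this]
  · have h1 : k ∉ S.erase j := fun h => hk (Finset.mem_erase.1 h).2
    have h2 : j ∈ insert k S := Finset.mem_insert.2 (Or.inr hj)
    rw [if_pos hj, if_neg hk, if_neg h1, if_pos h2,
      sg_erase k hj, sg_insert j hk, Finset.erase_insert_of_ne (fun h => hjk h.symm)]
    rcases lt_or_gt_of_ne hjk with h | h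
    · rw [if_pos h, if_neg (asymm h)]; ring
    · rw [if_neg (asymm h), if_pos h]; ring
  · simp [hj, hk]
  · have : j ∉ insert k S := by simp [hj, hjk]
    simp [hj, hk, this]

/-- CAR: mixed anticommutator at equal index is the identity. -/
lemma car_ca_eq (j : Fin m) (f : SpinorSpace m) :
    creation j (annihilation j f) + annihilation j (creation j f) = f := by
  funext S
  simp only [Pi.add_apply, creation_apply, annihilation_apply]
  by_cases hj : j ∈ S
  · rw [if_pos hj, if_pos hj, Finset.notMem_erase j S |> if_neg, add_zero,
      sg_erase_self, Finset.insert_erase hj, ← mul_assoc, sg_mul_self, one_mul]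
  · rw [if_neg hj, if_neg hj, if_pos (Finset.mem_insert_self j S), zero_add,
      sg_insert_self hj, Finset.erase_insert hj, ← mul_assoc, sg_mul_self, one_mul]



/- linearity of creation/annihilation -/
lemma creation_add (j : Fin m) (f g : SpinorSpace m) :
    creation j (f + g) = creation j f + creation j g := by
  funext S; simp only [creation_apply, Pi.add_apply]
  split <;> simp [mul_add]

lemma annihilation_add (j : Fin m) (f g : SpinorSpace m) :
    annihilation j (f + g) = annihilation j f + annihilation j g := by
  funext S; simp only [annihilation_apply, Pi.add_apply]
  split <;> simp [mul_add]

lemma creation_sub (j : Fin m) (f g : SpinorSpace m) :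
    creation j (f - g) = creation j f - creation j g := by
  funext S; simp only [creation_apply, Pi.sub_apply]
  split <;> simp [mul_sub]

lemma annihilation_sub (j : Fin m) (f g : SpinorSpace m) :
    annihilation j (f - g) = annihilation j f - annihilation j g := by
  funext S; simp only [annihilation_apply, Pi.sub_apply]
  split <;> simp [mul_sub]

lemma creation_smul (j : Fin m) (z : ℂ) (f : SpinorSpace m) :
    creation j (z • f) = z • creation j f := by
  funext S
  by_cases h : j ∈ S
  · simp only [creation_apply, Pi.smul_apply, smul_eq_mul, if_pos h]; ring
  · simp only [creation_apply, Pi.smul_apply, smul_eq_mul, if_neg h, mul_zero]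

lemma annihilation_smul (j : Fin m) (z : ℂ) (f : SpinorSpace m) :
    annihilation j (z • f) = z • annihilation j f := by
  funext S
  by_cases h : j ∈ S
  · simp only [annihilation_apply, Pi.smul_apply, smul_eq_mul, if_pos h, mul_zero]
  · simp only [annihilation_apply, Pi.smul_apply, smul_eq_mul, if_neg h]; ring

lemma gammaOp_apply_lt {I : Fin (2 * m)} (h : (I : ℕ) < m) (f : SpinorSpace m) :
    gammaOp I f = creation ⟨(I : ℕ), h⟩ f + annihilation ⟨(I : ℕ), h⟩ f := by
  simp [gammaOp, h]

lemma gammaOp_apply_ge {I : Fin (2 * m)} (h : ¬ (I : ℕ) < m) (f : SpinorSpace m) :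
    gammaOp I f = Complex.I • (creation ⟨(I : ℕ) - m, by have := I.isLt; omega⟩ f
      - annihilation ⟨(I : ℕ) - m, by have := I.isLt; omega⟩ f) := by
  simp [gammaOp, h]

lemma gammaOp_smul (I : Fin (2 * m)) (z : ℂ) (f : SpinorSpace m) :
    gammaOp I (z • f) = z • gammaOp I f := by
  unfold gammaOp
  split
  · rw [creation_smul, annihilation_smul, smul_add]
  · rw [creation_smul, annihilation_smul, ← smul_sub, smul_comm]

lemma gammaOp_neg (I : Fin (2 * m)) (f : SpinorSpace m) :
    gammaOp I (-f) = - gammaOp I f := by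
  have := gammaOp_smul I (-1) f
  simpa using this

/- anticommutation at the Gp/Gm level -/
lemma anti_pp {j k : Fin m} (h : j ≠ k) (f : SpinorSpace m) :
    (creation j (creation k f + annihilation k f) + annihilation j (creation k f + annihilation k f))
    + (creation k (creation j f + annihilation j f) + annihilation k (creation j f + annihilation j f)) = 0 := by
  simp only [creation_add, annihilation_add]
  funext S
  have h1 := congrFun (car_cc j k f) S
  have h2 := congrFun (car_aa j k f) S
  have h3 := congrFun (car_ca_ne h f) S
  have h4 := congrFun (car_ca_ne (Ne.symm h) f) S
  simp only [Pi.add_apply, Pi.zero_apply] at h1 h2 h3 h4 ⊢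
  linear_combination h1 + h2 + h3 + h4

lemma anti_mm {j k : Fin m} (h : j ≠ k) (f : SpinorSpace m) :
    (Complex.I • (creation j (Complex.I • (creation k f - annihilation k f))
        - annihilation j (Complex.I • (creation k f - annihilation k f))))
    + (Complex.I • (creation k (Complex.I • (creation j f - annihilation j f))
        - annihilation k (Complex.I • (creation j f - annihilation j f)))) = 0 := by
  simp only [creation_smul, annihilation_smul, creation_sub, annihilation_sub]
  funext S
  have h1 := congrFun (car_cc j k f) S
  have h2 := congrFun (car_aa j k f) S
  have h3 := congrFun (car_ca_ne h f) S
  have h4 := congrFun (car_ca_ne (Ne.symm h) f) S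
  simp only [Pi.add_apply, Pi.zero_apply, Pi.smul_apply, Pi.sub_apply, smul_eq_mul] at h1 h2 h3 h4 ⊢
  linear_combination (Complex.I * Complex.I) * (h1 + h2 - h3 - h4)

lemma anti_pm (j k : Fin m) (f : SpinorSpace m) :
    (creation j (Complex.I • (creation k f - annihilation k f))
      + annihilation j (Complex.I • (creation k f - annihilation k f)))
    + (Complex.I • (creation k (creation j f + annihilation j f)
        - annihilation k (creation j f + annihilation j f))) = 0 := by
  simp only [creation_smul, annihilation_smul, creation_sub, annihilation_sub,
    creation_add, annihilation_add]
  funext S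
  have h1 := congrFun (car_cc j k f) S
  have h2 := congrFun (car_aa j k f) S
  by_cases h : j = k
  · subst h
    have h3 := congrFun (car_ca_eq j f) S
    have h4 := congrFun (car_ca_eq j f) S
    simp only [Pi.add_apply, Pi.zero_apply, Pi.smul_apply, Pi.sub_apply, smul_eq_mul] at h1 h2 h3 h4 ⊢
    linear_combination Complex.I * (h1 - h2 - h3 + h4)
  · have h3 := congrFun (car_ca_ne h f) S
    have h4 := congrFun (car_ca_ne (Ne.symm h) f) S
    simp only [Pi.add_apply, Pi.zero_apply, Pi.smul_apply, Pi.sub_apply, smul_eq_mul] at h1 h2 h3 h4 ⊢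
    linear_combination Complex.I * (h1 - h2 - h3 + h4)

lemma gammaOp_anticomm {I J : Fin (2 * m)} (hIJ : I ≠ J) (f : SpinorSpace m) :
    gammaOp I (gammaOp J f) + gammaOp J (gammaOp I f) = 0 := by
  have hv : (I : ℕ) ≠ (J : ℕ) := fun h => hIJ (Fin.ext h)
  by_cases hI : (I : ℕ) < m <;> by_cases hJ : (J : ℕ) < m
  · rw [gammaOp_apply_lt hI, gammaOp_apply_lt hJ, gammaOp_apply_lt hI, gammaOp_apply_lt hJ]
    exact anti_pp (by simp [Fin.ext_iff]; omega) f
  · rw [gammaOp_apply_lt hI, gammaOp_apply_ge hJ, gammaOp_apply_ge hJ, gammaOp_apply_lt hI]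
    exact anti_pm _ _ f
  · rw [gammaOp_apply_ge hI, gammaOp_apply_lt hJ, gammaOp_apply_lt hJ, gammaOp_apply_ge hI]
    rw [add_comm]
    exact anti_pm _ _ f
  · rw [gammaOp_apply_ge hI, gammaOp_apply_ge hJ, gammaOp_apply_ge hI, gammaOp_apply_ge hJ]
    exact anti_mm (by simp [Fin.ext_iff]; omega) f

lemma gammaOp_swap {I J : Fin (2 * m)} (hIJ : I ≠ J) (f : SpinorSpace m) :
    gammaOp I (gammaOp J f) = - gammaOp J (gammaOp I f) :=
  eq_neg_of_add_eq_zero_left (gammaOp_anticomm hIJ f)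


lemma herm_add_left (f g h : SpinorSpace m) : herm (f + g) h = herm f h + herm g h := by
  simp [herm, add_mul, Finset.sum_add_distrib]

lemma herm_add_right (f g h : SpinorSpace m) : herm f (g + h) = herm f g + herm f h := by
  simp [herm, mul_add, Finset.sum_add_distrib]

lemma herm_sub_right (f g h : SpinorSpace m) : herm f (g - h) = herm f g - herm f h := by
  simp [herm, mul_sub, Finset.sum_sub_distrib]

lemma herm_neg_right (f g : SpinorSpace m) : herm f (-g) = - herm f g := by
  simp [herm, Finset.sum_neg_distrib]

lemma herm_smul_left (z : ℂ) (f g : SpinorSpace m) :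
    herm (z • f) g = (starRingEnd ℂ) z * herm f g := by
  simp [herm, Finset.mul_sum, mul_assoc]

lemma herm_smul_right (z : ℂ) (f g : SpinorSpace m) :
    herm f (z • g) = z * herm f g := by
  simp [herm, Finset.mul_sum]; apply Finset.sum_congr rfl; intros; ring

lemma herm_sub_left (f g h : SpinorSpace m) : herm (f - g) h = herm f h - herm g h := by
  simp [herm, sub_mul, Finset.sum_sub_distrib]

/-- the toggle involution -/
def tog (j : Fin m) (S : Finset (Fin m)) : Finset (Fin m) :=
  if j ∈ S then S.erase j else insert j S

lemma tog_invol (j : Fin m) : Function.Involutive (tog j) := by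
  intro S
  unfold tog
  by_cases h : j ∈ S
  · rw [if_pos h, if_neg (Finset.notMem_erase j S), Finset.insert_erase h]
  · rw [if_neg h, if_pos (Finset.mem_insert_self j S), Finset.erase_insert h]

def togP (j : Fin m) : Equiv.Perm (Finset (Fin m)) :=
  Function.Involutive.toPerm _ (tog_invol j)

lemma togP_apply (j : Fin m) (S) : togP j S = tog j S := rfl

lemma herm_creation (j : Fin m) (f g : SpinorSpace m) :
    herm (creation j f) g = herm f (annihilation j g) := by
  unfold herm
  refine (Fintype.sum_equiv (togP (m := m) j) _ _ ?_).symm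
  intro S
  by_cases h : j ∈ S
  · have : togP (m := m) j S = S.erase j := by
      simp [togP_apply, tog, h]
    rw [this]
    simp [creation_apply, annihilation_apply, h, Finset.notMem_erase]
  · have : togP (m := m) j S = insert j S := by
      simp [togP_apply, tog, h]
    rw [this]
    simp only [creation_apply, annihilation_apply, if_neg h,
      if_pos (Finset.mem_insert_self j S), Finset.erase_insert h, sg_insert_self h,
      map_mul, conj_sg]
    ring

lemma herm_conj_symm (f g : SpinorSpace m) : herm f g = (starRingEnd ℂ) (herm g f) := by
  unfold herm
  rw [map_sum]
  apply Finset.sum_congr rfl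
  intros
  simp [mul_comm]

lemma herm_annihilation (j : Fin m) (f g : SpinorSpace m) :
    herm (annihilation j f) g = herm f (creation j g) := by
  rw [herm_conj_symm, ← herm_creation, ← herm_conj_symm]

lemma herm_gammaOp (I : Fin (2 * m)) (f g : SpinorSpace m) :
    herm (gammaOp I f) g = herm f (gammaOp I g) := by
  unfold gammaOp
  split
  · rw [herm_add_left, herm_creation, herm_annihilation, herm_add_right]; ring
  · rw [herm_smul_left, herm_smul_right, herm_sub_left, herm_sub_right,
      herm_creation, herm_annihilation, Complex.conj_I]
    ring

/- conjOp lemmas -/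
lemma conjOp_creation (j : Fin m) (f : SpinorSpace m) :
    conjOp (creation j f) = creation j (conjOp f) := by
  funext S
  simp only [conjOp, creation_apply, apply_ite (starRingEnd ℂ), map_mul, conj_sg, map_zero]

lemma conjOp_annihilation (j : Fin m) (f : SpinorSpace m) :
    conjOp (annihilation j f) = annihilation j (conjOp f) := by
  funext S
  simp only [conjOp, annihilation_apply, apply_ite (starRingEnd ℂ), map_mul, conj_sg, map_zero]

lemma conjOp_add (f g : SpinorSpace m) : conjOp (f + g) = conjOp f + conjOp g := by
  funext S; simp [conjOp]

lemma conjOp_sub (f g : SpinorSpace m) : conjOp (f - g) = conjOp f - conjOp g := by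
  funext S; simp [conjOp]

lemma conjOp_smul (z : ℂ) (f : SpinorSpace m) :
    conjOp (z • f) = (starRingEnd ℂ) z • conjOp f := by
  funext S; simp [conjOp]

lemma conjOp_neg (f : SpinorSpace m) : conjOp (-f) = - conjOp f := by
  funext S; simp [conjOp]

lemma conjOp_gammaOp (I : Fin (2 * m)) (f : SpinorSpace m) :
    conjOp (gammaOp I f) = (if (I : ℕ) < m then (1 : ℂ) else -1) • gammaOp I (conjOp f) := by
  unfold gammaOp
  split
  · rw [conjOp_add, conjOp_creation, conjOp_annihilation, one_smul]
  · rw [conjOp_smul, Complex.conj_I, conjOp_sub, conjOp_creation, conjOp_annihilation,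
      neg_smul, neg_smul, one_smul]


@[simp] lemma gammaProd_nil (f : SpinorSpace m) : gammaProd ([] : List (Fin (2*m))) f = f := rfl

@[simp] lemma gammaProd_cons (J : Fin (2*m)) (l : List (Fin (2*m))) (f : SpinorSpace m) :
    gammaProd (J :: l) f = gammaOp J (gammaProd l f) := rfl

lemma gammaProd_append (l₁ l₂ : List (Fin (2*m))) (f : SpinorSpace m) :
    gammaProd (l₁ ++ l₂) f = gammaProd l₁ (gammaProd l₂ f) := by
  induction l₁ with
  | nil => rfl
  | cons J l ih => simp [ih]

lemma gammaProd_smul (l : List (Fin (2*m))) (z : ℂ) (f : SpinorSpace m) :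
    gammaProd l (z • f) = z • gammaProd l f := by
  induction l with
  | nil => rfl
  | cons J l ih => simp [ih, gammaOp_smul]

lemma gammaProd_neg (l : List (Fin (2*m))) (f : SpinorSpace m) :
    gammaProd l (-f) = - gammaProd l f := by
  induction l with
  | nil => rfl
  | cons J l ih => simp [ih, gammaOp_neg]

/-- Move a gamma through a product not containing it. -/
lemma moveA {l : List (Fin (2*m))} {I : Fin (2*m)} (h : I ∉ l) (f : SpinorSpace m) :
    gammaProd l (gammaOp I f) = ((-1 : ℂ) ^ l.length) • gammaOp I (gammaProd l f) := by
  induction l with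
  | nil => simp
  | cons J l ih =>
    have hJI : J ≠ I := fun hh => h (hh ▸ (List.mem_cons_self : J ∈ J :: l))
    have hIl : I ∉ l := fun hh => h (List.mem_cons_of_mem J hh)
    rw [gammaProd_cons, ih hIl, gammaOp_smul, gammaOp_swap hJI, List.length_cons, pow_succ,
      gammaProd_cons, smul_neg, ← neg_smul, mul_neg_one]

/-- Move a gamma through a nodup product containing it once. -/
lemma moveB {l : List (Fin (2*m))} {I : Fin (2*m)} (hn : l.Nodup) (h : I ∈ l)
    (f : SpinorSpace m) :
    gammaProd l (gammaOp I f) = ((-1 : ℂ) ^ (l.length - 1)) • gammaOp I (gammaProd l f) := by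
  obtain ⟨s, t, rfl⟩ := List.append_of_mem h
  have hs : I ∉ s := by
    have := List.disjoint_of_nodup_append hn
    intro hI; exact this hI (List.mem_cons_self : I ∈ I :: t)
  have ht : I ∉ t := by
    have := (List.nodup_append.1 hn).2.1
    exact (List.nodup_cons.1 this).1
  have hlen : (s ++ I :: t).length - 1 = s.length + t.length := by
    simp
  rw [hlen]
  rw [gammaProd_append, gammaProd_cons, gammaProd_append, gammaProd_cons]
  rw [moveA ht f, gammaOp_smul, gammaProd_smul,
    moveA hs (gammaOp I (gammaProd t f)),
    moveA hs (gammaProd t f), gammaOp_smul, smul_smul, smul_smul, smul_smul, ← pow_add]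
  congr 1
  ring

lemma herm_gammaProd (l : List (Fin (2*m))) (f g : SpinorSpace m) :
    herm (gammaProd l f) g = herm f (gammaProd l.reverse g) := by
  induction l generalizing g with
  | nil => rfl
  | cons J l ih =>
    rw [gammaProd_cons, herm_gammaOp, ih (gammaOp J g), List.reverse_cons,
      gammaProd_append, gammaProd_cons, gammaProd_nil]

lemma gammaProd_reverse {l : List (Fin (2*m))} (hn : l.Nodup) (f : SpinorSpace m) :
    gammaProd l.reverse f = ((-1 : ℂ) ^ (l.length.choose 2)) • gammaProd l f := by
  induction l generalizing f with
  | nil => simp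
  | cons J l ih =>
    have hJ : J ∉ l := (List.nodup_cons.1 hn).1
    have hln : l.Nodup := (List.nodup_cons.1 hn).2
    rw [List.reverse_cons, gammaProd_append, gammaProd_cons, gammaProd_nil,
      ih hln (f := gammaOp J f), moveA hJ, smul_smul, ← pow_add, gammaProd_cons]
    congr 2
    show l.length.choose 2 + l.length = (l.length + 1).choose 2
    rw [Nat.choose_two_right, Nat.choose_two_right, Nat.triangle_succ]

lemma conjOp_gammaProd (l : List (Fin (2*m))) (f : SpinorSpace m) :
    conjOp (gammaProd l f)
      = (l.map fun I : Fin (2*m) => if (I : ℕ) < m then (1 : ℂ) else -1).prod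
        • gammaProd l (conjOp f) := by
  induction l with
  | nil => simp
  | cons J l ih =>
    rw [gammaProd_cons, conjOp_gammaOp, ih, gammaOp_smul, List.map_cons, List.prod_cons,
      smul_smul, gammaProd_cons]


/-- the full list `Γ_1, …, Γ_{2m}`. -/
def fullL (m : ℕ) : List (Fin (2 * m)) := List.ofFn fun I : Fin (2 * m) => I

/-- the second-half list `Γ_{m+1}, …, Γ_{2m}`. -/
def secL (m : ℕ) : List (Fin (2 * m)) := List.ofFn fun j : Fin m =>
    (⟨m + (j : ℕ), by have := j.isLt; omega⟩ : Fin (2 * m))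

lemma fullL_nodup : (fullL m).Nodup := List.nodup_ofFn.mpr fun _ _ h => h

lemma fullL_mem (I : Fin (2 * m)) : I ∈ fullL m := List.mem_ofFn.2 ⟨I, rfl⟩

lemma fullL_length : (fullL m).length = 2 * m := List.length_ofFn

lemma secL_nodup : (secL m).Nodup := by
  refine List.nodup_ofFn.mpr fun a b h => ?_
  simp only [Fin.mk.injEq] at h
  exact Fin.ext (by omega)

lemma secL_length : (secL m).length = m := List.length_ofFn

lemma secL_mem (I : Fin (2 * m)) : I ∈ secL m ↔ m ≤ (I : ℕ) := by
  constructor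
  · intro h
    obtain ⟨j, hj⟩ := List.mem_ofFn.1 h
    rw [← hj]; simp
  · intro h
    refine List.mem_ofFn.2 ⟨⟨(I : ℕ) - m, by have := I.isLt; omega⟩, ?_⟩
    exact Fin.ext (by simp; omega)

lemma conj_I_pow (hodd : Odd m) :
    (starRingEnd ℂ) (Complex.I ^ (m + 1)) = Complex.I ^ (m + 1) := by
  obtain ⟨t, ht⟩ := hodd
  rw [map_pow, Complex.conj_I, Even.neg_pow ⟨t + 1, by omega⟩]

lemma prod_sign (hodd : Odd m) :
    ((fullL m).map fun I : Fin (2 * m) => if (I : ℕ) < m then (1 : ℂ) else -1).prod = -1 := by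
  rw [fullL, List.map_ofFn, List.prod_ofFn]
  have e1 : ∀ I : Fin (2 * m),
      ((fun I : Fin (2 * m) => if (I : ℕ) < m then (1 : ℂ) else -1) ∘ fun I => I) I
        = (-1 : ℂ) ^ (if (I : ℕ) < m then 0 else 1) := by
    intro I
    by_cases h : (I : ℕ) < m <;> simp [h]
  rw [Finset.prod_congr rfl fun I _ => e1 I, Finset.prod_pow_eq_pow_sum]
  have e2 : ∑ I : Fin (2 * m), (if (I : ℕ) < m then 0 else 1) = m := by
    rw [Fin.sum_univ_eq_sum_range (fun i => if i < m then 0 else 1) (2 * m),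
      Finset.range_eq_Ico, ← Finset.sum_Ico_consecutive _ (Nat.zero_le m) (by omega : m ≤ 2 * m)]
    rw [Finset.sum_eq_zero fun i hi => if_pos (Finset.mem_Ico.1 hi).2]
    rw [Finset.sum_congr rfl fun i hi => if_neg (by have := (Finset.mem_Ico.1 hi).1; omega)]
    rw [Finset.sum_const, Nat.card_Ico, smul_eq_mul]
    omega
  rw [e2, hodd.neg_one_pow]

lemma gammaZero_def (f : SpinorSpace m) :
    gammaZero m f = Complex.I ^ (m + 1) • gammaProd (fullL m) f := rfl

lemma gammaZero_gammaOp (hm : 1 ≤ m) (I : Fin (2 * m)) (f : SpinorSpace m) :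
    gammaZero m (gammaOp I f) = - gammaOp I (gammaZero m f) := by
  rw [gammaZero_def, gammaZero_def,
    moveB fullL_nodup (fullL_mem I) f]
  have : ((-1 : ℂ) ^ ((fullL (m := m)).length - 1)) = -1 := by
    rw [fullL_length]
    exact Odd.neg_one_pow ⟨m - 1, by omega⟩
  rw [this, gammaOp_smul, smul_smul, mul_neg_one, neg_smul]

lemma gammaOp_gammaZero (hm : 1 ≤ m) (I : Fin (2 * m)) (f : SpinorSpace m) :
    gammaOp I (gammaZero m f) = - gammaZero m (gammaOp I f) := by
  rw [gammaZero_gammaOp hm, neg_neg]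

lemma conjOp_gammaZero (hodd : Odd m) (f : SpinorSpace m) :
    conjOp (gammaZero m f) = - gammaZero m (conjOp f) := by
  rw [gammaZero_def, gammaZero_def, conjOp_smul, conj_I_pow hodd,
    conjOp_gammaProd, prod_sign hodd, smul_smul, mul_neg_one, neg_smul]

lemma gammaProd_gammaZero (hm : 1 ≤ m) (l : List (Fin (2 * m))) (f : SpinorSpace m) :
    gammaProd l (gammaZero m f) = ((-1 : ℂ) ^ l.length) • gammaZero m (gammaProd l f) := by
  induction l with
  | nil => simp
  | cons J l ih =>
    rw [gammaProd_cons, ih, gammaOp_smul, gammaOp_gammaZero hm, List.length_cons, pow_succ,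
      gammaProd_cons, smul_neg, ← neg_smul, mul_neg_one]

lemma gammaLor_zero {a : Fin (2 * m + 1)} (h : (a : ℕ) = 0) (f : SpinorSpace m) :
    gammaLor m a f = gammaZero m f := by
  rw [gammaLor, dif_pos h]

lemma gammaLor_pos {a : Fin (2 * m + 1)} (h : ¬ (a : ℕ) = 0) (f : SpinorSpace m) :
    gammaLor m a f
      = gammaOp (⟨(a : ℕ) - 1, by have := a.isLt; omega⟩ : Fin (2 * m)) f := by
  rw [gammaLor, dif_neg h]

lemma gammaLor_smul (a : Fin (2 * m + 1)) (z : ℂ) (f : SpinorSpace m) :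
    gammaLor m a (z • f) = z • gammaLor m a f := by
  by_cases h : (a : ℕ) = 0
  · rw [gammaLor_zero h, gammaLor_zero h, gammaZero_def, gammaZero_def, gammaProd_smul,
      smul_smul, smul_smul, mul_comm]
  · rw [gammaLor_pos h, gammaLor_pos h, gammaOp_smul]

lemma gammaLor_anticomm (hm : 1 ≤ m) {a b : Fin (2 * m + 1)} (hab : a ≠ b)
    (f : SpinorSpace m) :
    gammaLor m a (gammaLor m b f) = - gammaLor m b (gammaLor m a f) := by
  by_cases ha : (a : ℕ) = 0 <;> by_cases hb : (b : ℕ) = 0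
  · exact absurd (Fin.ext (ha.trans hb.symm)) hab
  · rw [gammaLor_zero ha, gammaLor_zero ha, gammaLor_pos hb, gammaLor_pos hb,
      gammaZero_gammaOp hm]
  · rw [gammaLor_zero hb, gammaLor_zero hb, gammaLor_pos ha, gammaLor_pos ha,
      gammaOp_gammaZero hm]
  · rw [gammaLor_pos ha, gammaLor_pos ha, gammaLor_pos hb, gammaLor_pos hb]
    refine gammaOp_swap ?_ f
    have : (a : ℕ) ≠ (b : ℕ) := fun h => hab (Fin.ext h)
    simp only [ne_eq, Fin.mk.injEq]
    omega

lemma opB_def (f : SpinorSpace m) : opB m f = gammaProd (secL m) (conjOp f) := rfl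

lemma opB_gammaLor (hm : 1 ≤ m) (hodd : Odd m) (a : Fin (2 * m + 1)) (f : SpinorSpace m) :
    opB m (gammaLor m a f) = (if (a : ℕ) = 0 then (1 : ℂ) else -1) • gammaLor m a (opB m f) := by
  by_cases h : (a : ℕ) = 0
  · rw [if_pos h, one_smul, gammaLor_zero h, gammaLor_zero h, opB_def, opB_def,
      conjOp_gammaZero hodd, gammaProd_neg, gammaProd_gammaZero hm, secL_length,
      hodd.neg_one_pow, neg_smul, one_smul, neg_neg]
  · rw [if_neg h, gammaLor_pos h, gammaLor_pos h, opB_def, opB_def, conjOp_gammaOp,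
      gammaProd_smul]
    set I : Fin (2 * m) := ⟨(a : ℕ) - 1, by have := a.isLt; omega⟩ with hI
    by_cases hIm : (I : ℕ) < m
    · rw [if_pos hIm, one_smul, moveA (fun hmem => by have := (secL_mem I).1 hmem; omega) _,
        secL_length, hodd.neg_one_pow, neg_smul, one_smul]
    · rw [if_neg hIm, moveB secL_nodup ((secL_mem I).2 (by omega)) _, secL_length]
      have : ((-1 : ℂ) ^ (m - 1)) = 1 := by
        obtain ⟨t, ht⟩ := hodd
        exact Even.neg_one_pow ⟨t, by omega⟩
      rw [this, one_smul, neg_smul, one_smul]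

lemma choose_odd (hm : 1 ≤ m) (hodd : Odd m) : Odd ((2 * m).choose 2) := by
  have h1 : (2 * m).choose 2 = m * (2 * m - 1) := by
    rw [Nat.choose_two_right, mul_assoc, Nat.mul_div_cancel_left _ (by norm_num : 0 < 2)]
  rw [h1]
  exact hodd.mul ⟨m - 1, by omega⟩

lemma herm_gammaLor (hm : 1 ≤ m) (hodd : Odd m) (a : Fin (2 * m + 1)) (f g : SpinorSpace m) :
    herm (gammaLor m a f) g = (if (a : ℕ) = 0 then (-1 : ℂ) else 1) * herm f (gammaLor m a g) := by
  by_cases h : (a : ℕ) = 0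
  · rw [if_pos h, gammaLor_zero h, gammaLor_zero h, gammaZero_def, gammaZero_def,
      herm_smul_left, conj_I_pow hodd, herm_gammaProd,
      gammaProd_reverse fullL_nodup, herm_smul_right, fullL_length,
      (choose_odd hm hodd).neg_one_pow, herm_smul_right]
    ring
  · rw [if_neg h, one_mul, gammaLor_pos h, gammaLor_pos h, herm_gammaOp]

end SpinorAux

open SpinorAux in
/-- for odd `m`, the bilinear form `𝔅` is `Spin(1, 2m)`-invariant:
`𝔅(Γ_a Γ_b σ, τ) + 𝔅(σ, Γ_a Γ_b τ) = 0` for all distinct `a, b ∈ {0, 1, …, 2m}`. -/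
theorem formB_spin_lorentz_invariant (m : ℕ) (hm : 1 ≤ m) (hodd : Odd m) :
    ∀ a b : Fin (2 * m + 1), a ≠ b → ∀ σ τ : SpinorSpace m,
      formB (gammaLor m a (gammaLor m b σ)) τ + formB σ (gammaLor m a (gammaLor m b τ)) = 0 := by
  intro a b hab σ τ
  simp only [formB]
  rw [opB_gammaLor hm hodd a, opB_gammaLor hm hodd b, gammaLor_smul, smul_smul,
    herm_smul_left, herm_gammaLor hm hodd a, herm_gammaLor hm hodd b,
    gammaLor_anticomm hm (Ne.symm hab), herm_neg_right]
  by_cases ha : (a : ℕ) = 0 <;> by_cases hb : (b : ℕ) = 0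
  · exact absurd (Fin.ext (ha.trans hb.symm)) hab
  all_goals (simp [ha, hb]; try ring)
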